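/- Let n ≥ k ≥ 1, 0 < ε < 1, d = ⌈8k/ε⌉, and L = ⌈512·log(n)/ε²⌉. If L vertex partitionings of an n-vertex set into d subsets are chosen independently and uniformly at random (each vertex assigned to a uniformly random subset in each partitioning), then with probability at least 1 − 1/poly(n), for every set S of 2k vertices there is a partitioning in which at least (1−ε/4)·2k subsets contain a vertex of S. Consequently the partitionings are (k,ε) matching preserving for every graph on these vertices. -/

import Mathlib

/-- Degree of a vertex `v` in an edge set `E`. -/
def degE {V : Type*} [Fintype V] [DecidableEq V] (E : Finset (Sym2 V)) (v : V) : ℕ :=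
  (E.filter (fun e => v ∈ e)).card

/-- A finite set of edges forms a matching: no loops and no two distinct edges share a vertex. -/
def IsMatching {V : Type*} [Fintype V] [DecidableEq V] (M : Finset (Sym2 V)) : Prop :=
  (∀ e ∈ M, ¬ e.IsDiag) ∧ ∀ e ∈ M, ∀ f ∈ M, e ≠ f → ∀ v : V, ¬ (v ∈ e ∧ v ∈ f)

instance {V : Type*} [Fintype V] [DecidableEq V] :
    DecidablePred (IsMatching (V := V)) := fun M => by
  unfold IsMatching; infer_instance

/-- Maximum matching size of the graph with edge set `E`. -/
def matchNum {V : Type*} [Fintype V] [DecidableEq V] (E : Finset (Sym2 V)) : ℕ :=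
  Finset.sup (E.powerset.filter (fun M => IsMatching M)) Finset.card

set_option maxHeartbeats 1000000

open Finset

variable {α : Type*} [DecidableEq α]

lemma sum_pc_succ (S : Finset α) (c : α → ℕ) (s : ℕ) :
    (s + 1) * ∑ T ∈ S.powersetCard (s+1), ∏ v ∈ T, c v ≤
      (∑ T ∈ S.powersetCard s, ∏ v ∈ T, c v) * ∑ v ∈ S, c v := by
  have key : ∑ T ∈ S.powersetCard s, ∑ v ∈ S \ T, ∏ u ∈ insert v T, c u
      = ∑ T' ∈ S.powersetCard (s+1), ∑ v ∈ T', ∏ u ∈ T', c u := by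
    rw [Finset.sum_sigma', Finset.sum_sigma']
    refine Finset.sum_nbij' (fun p => ⟨insert p.2 p.1, p.2⟩) (fun p => ⟨p.1.erase p.2, p.2⟩)
      ?_ ?_ ?_ ?_ ?_
    · rintro ⟨T, v⟩ hp
      simp only [Finset.mem_sigma, Finset.mem_powersetCard, Finset.mem_sdiff] at hp ⊢
      obtain ⟨⟨hTS, hTc⟩, hvS, hvT⟩ := hp
      exact ⟨⟨Finset.insert_subset hvS hTS, by rw [Finset.card_insert_of_notMem hvT, hTc]⟩,
        Finset.mem_insert_self _ _⟩
    · rintro ⟨T', v⟩ hp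
      simp only [Finset.mem_sigma, Finset.mem_powersetCard, Finset.mem_sdiff] at hp ⊢
      obtain ⟨⟨hTS, hTc⟩, hv⟩ := hp
      refine ⟨⟨(Finset.erase_subset _ _).trans hTS, ?_⟩, hTS hv, Finset.notMem_erase _ _⟩
      rw [Finset.card_erase_of_mem hv, hTc]; rfl
    · rintro ⟨T, v⟩ hp
      simp only [Finset.mem_sigma, Finset.mem_powersetCard, Finset.mem_sdiff] at hp
      simp [Finset.erase_insert hp.2.2]
    · rintro ⟨T', v⟩ hp
      simp only [Finset.mem_sigma, Finset.mem_powersetCard] at hp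
      simp [Finset.insert_erase hp.2]
    · rintro ⟨T, v⟩ hp; rfl
  calc (s + 1) * ∑ T ∈ S.powersetCard (s+1), ∏ v ∈ T, c v
      = ∑ T' ∈ S.powersetCard (s+1), ∑ _v ∈ T', ∏ u ∈ T', c u := by
        rw [Finset.mul_sum]
        refine Finset.sum_congr rfl fun T' hT' => ?_
        rw [Finset.sum_const, (Finset.mem_powersetCard.1 hT').2, smul_eq_mul]
    _ = ∑ T ∈ S.powersetCard s, ∑ v ∈ S \ T, ∏ u ∈ insert v T, c u := key.symm
    _ ≤ ∑ T ∈ S.powersetCard s, (∏ u ∈ T, c u) * ∑ v ∈ S, c v := by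
        refine Finset.sum_le_sum fun T hT => ?_
        have hTS := (Finset.mem_powersetCard.1 hT).1
        calc ∑ v ∈ S \ T, ∏ u ∈ insert v T, c u
            = ∑ v ∈ S \ T, c v * ∏ u ∈ T, c u := by
              refine Finset.sum_congr rfl fun v hv => ?_
              rw [Finset.prod_insert (Finset.mem_sdiff.1 hv).2]
          _ ≤ ∑ v ∈ S, c v * ∏ u ∈ T, c u :=
              Finset.sum_le_sum_of_subset (Finset.sdiff_subset)
          _ = (∏ u ∈ T, c u) * ∑ v ∈ S, c v := by
              rw [Finset.mul_sum]
              exact Finset.sum_congr rfl fun v _ => Nat.mul_comm _ _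
    _ = (∑ T ∈ S.powersetCard s, ∏ v ∈ T, c v) * ∑ v ∈ S, c v := by rw [Finset.sum_mul]

lemma esymm_le_pow (S : Finset α) (c : α → ℕ) :
    ∀ s : ℕ, s.factorial * ∑ T ∈ S.powersetCard s, ∏ v ∈ T, c v ≤ (∑ v ∈ S, c v) ^ s
  | 0 => by simp
  | (s+1) => by
    have h1 := sum_pc_succ S c s
    have h2 := esymm_le_pow S c s
    calc (s+1).factorial * ∑ T ∈ S.powersetCard (s+1), ∏ v ∈ T, c v
        = s.factorial * ((s+1) * ∑ T ∈ S.powersetCard (s+1), ∏ v ∈ T, c v) := by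
          rw [Nat.factorial_succ]; ring
      _ ≤ s.factorial * ((∑ T ∈ S.powersetCard s, ∏ v ∈ T, c v) * ∑ v ∈ S, c v) :=
          Nat.mul_le_mul_left _ h1
      _ = (s.factorial * ∑ T ∈ S.powersetCard s, ∏ v ∈ T, c v) * ∑ v ∈ S, c v := by ring
      _ ≤ (∑ v ∈ S, c v) ^ s * ∑ v ∈ S, c v := Nat.mul_le_mul_right _ h2
      _ = (∑ v ∈ S, c v) ^ (s+1) := by rw [pow_succ]

lemma sum_rank_le_aux {α : Type*} [LinearOrder α] :
    ∀ m : ℕ, ∀ S : Finset α, S.card = m →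
      ∑ v ∈ S, (S.filter (· < v)).card ≤ S.card.choose 2
  | 0, S, hm => by rw [Finset.card_eq_zero] at hm; simp [hm]
  | (m+1), S, hm => by
    have hS : S.Nonempty := by rw [← Finset.card_pos, hm]; omega
    set M := S.max' hS with hM
    have hMS : M ∈ S := S.max'_mem hS
    have hcard : (S.erase M).card = m := by rw [Finset.card_erase_of_mem hMS, hm]; omega
    have hfM : ∀ v ∈ S.erase M, S.filter (· < v) = (S.erase M).filter (· < v) := by
      intro v hv
      ext u
      simp only [Finset.mem_filter, Finset.mem_erase]
      constructor
      · rintro ⟨huS, huv⟩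
        refine ⟨⟨?_, huS⟩, huv⟩
        rintro rfl
        exact absurd (S.le_max' v (Finset.mem_of_mem_erase hv)) (not_le.2 huv)
      · rintro ⟨⟨_, huS⟩, huv⟩; exact ⟨huS, huv⟩
    have hsplit : ∑ v ∈ S, (S.filter (· < v)).card
        = (S.filter (· < M)).card + ∑ v ∈ S.erase M, (S.filter (· < v)).card := by
      rw [← Finset.add_sum_erase _ _ hMS]
    rw [hsplit]
    have h1 : (S.filter (· < M)).card ≤ m := by
      have : S.filter (· < M) ⊆ S.erase M := by
        intro u hu
        simp only [Finset.mem_filter] at hu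
        exact Finset.mem_erase.2 ⟨ne_of_lt hu.2, hu.1⟩
      calc (S.filter (· < M)).card ≤ (S.erase M).card := Finset.card_le_card this
        _ = m := hcard
    have h2 : ∑ v ∈ S.erase M, (S.filter (· < v)).card ≤ m.choose 2 := by
      calc ∑ v ∈ S.erase M, (S.filter (· < v)).card
          = ∑ v ∈ S.erase M, ((S.erase M).filter (· < v)).card :=
            Finset.sum_congr rfl fun v hv => by rw [hfM v hv]
        _ ≤ m.choose 2 := by
            have := sum_rank_le_aux m (S.erase M) hcard
            rwa [hcard] at this
    calc (S.filter (· < M)).card + ∑ v ∈ S.erase M, (S.filter (· < v)).card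
        ≤ m + m.choose 2 := Nat.add_le_add h1 h2
      _ = (m+1).choose 2 := by
          rw [Nat.choose_succ_succ, Nat.choose_one_right, Nat.add_comm]
      _ = S.card.choose 2 := by rw [hm]

lemma sum_rank_le {α : Type*} [LinearOrder α] (S : Finset α) :
    ∑ v ∈ S, (S.filter (· < v)).card ≤ S.card.choose 2 :=
  sum_rank_le_aux S.card S rfl


open Finset

variable {n d : ℕ}

def reps (S : Finset (Fin n)) (f : Fin n → Fin d) : Finset (Fin n) :=
  S.filter (fun v => ∃ u ∈ S, u < v ∧ f u = f v)

lemma card_le_image_add_reps (S : Finset (Fin n)) (f : Fin n → Fin d) :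
    S.card ≤ (S.image f).card + (reps S f).card := by
  have hinj : Set.InjOn f (S \ reps S f) := by
    intro u hu v hv huv
    simp only [Finset.coe_sdiff, Set.mem_diff, Finset.mem_coe] at hu hv
    by_contra hne
    rcases lt_or_gt_of_ne hne with h | h
    · exact hv.2 (Finset.mem_filter.2 ⟨hv.1, u, hu.1, h, huv⟩)
    · exact hu.2 (Finset.mem_filter.2 ⟨hu.1, v, hv.1, h, huv.symm⟩)
  have h1 : (S \ reps S f).card = ((S \ reps S f).image f).card :=
    (Finset.card_image_of_injOn (by exact_mod_cast hinj)).symm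
  have h2 : ((S \ reps S f).image f).card ≤ (S.image f).card :=
    Finset.card_le_card (Finset.image_subset_image Finset.sdiff_subset)
  have h3 : S.card ≤ (S \ reps S f).card + (reps S f).card := by
    have hsub : reps S f ⊆ S := Finset.filter_subset _ S
    have h4 := Finset.card_sdiff_add_card_eq_card hsub
    omega
  omega

noncomputable def wit (S : Finset (Fin n)) (f : Fin n → Fin d) (v : Fin n) : Fin n :=
  if h : (S.filter (fun u => u < v ∧ f u = f v)).Nonempty then
    (S.filter (fun u => u < v ∧ f u = f v)).min' h else v

lemma wit_spec {S : Finset (Fin n)} {f : Fin n → Fin d} {v : Fin n}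
    (hv : v ∈ reps S f) : wit S f v ∈ S ∧ wit S f v < v ∧ f (wit S f v) = f v := by
  obtain ⟨-, u, hu, h1, h2⟩ := Finset.mem_filter.1 hv
  have hne : (S.filter (fun u => u < v ∧ f u = f v)).Nonempty :=
    ⟨u, Finset.mem_filter.2 ⟨hu, h1, h2⟩⟩
  rw [wit, dif_pos hne]
  have := Finset.min'_mem _ hne
  exact Finset.mem_filter.1 this |>.elim fun a b => ⟨a, b⟩

lemma count_forced (S T : Finset (Fin n)) :
    (Finset.univ.filter (fun f : Fin n → Fin d => T ⊆ reps S f)).card * d ^ T.card ≤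
      (∏ v ∈ T, (S.filter (· < v)).card) * d ^ n := by
  classical
  set tgt : Finset (Fin n → Fin n ⊕ Fin d) :=
    Fintype.piFinset (fun v => if v ∈ T then (S.filter (· < v)).image Sum.inl
      else (Finset.univ : Finset (Fin d)).image Sum.inr) with htgt
  have hcard : tgt.card = (∏ v ∈ T, (S.filter (· < v)).card) * ∏ v ∈ Finset.univ \ T, d := by
    rw [htgt, Fintype.card_piFinset]
    rw [← Finset.prod_sdiff (Finset.subset_univ T)]
    rw [Nat.mul_comm]
    congr 1
    · exact Finset.prod_congr rfl fun v hv => by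
        rw [if_pos hv, Finset.card_image_of_injective _ Sum.inl_injective]
    · exact Finset.prod_congr rfl fun v hv => by
        rw [if_neg (Finset.mem_sdiff.1 hv).2, Finset.card_image_of_injective _ Sum.inr_injective,
          Finset.card_univ, Fintype.card_fin]
  set enc : (Fin n → Fin d) → (Fin n → Fin n ⊕ Fin d) :=
    fun f v => if v ∈ T then Sum.inl (wit S f v) else Sum.inr (f v) with henc
  have hmem : ∀ f ∈ Finset.univ.filter (fun f : Fin n → Fin d => T ⊆ reps S f), enc f ∈ tgt := by
    intro f hf
    have hf' := (Finset.mem_filter.1 hf).2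
    rw [htgt, Fintype.mem_piFinset]
    intro v
    by_cases hv : v ∈ T
    · rw [if_pos hv, henc]
      simp only [if_pos hv]
      obtain ⟨h1, h2, -⟩ := wit_spec (hf' hv)
      exact Finset.mem_image_of_mem _ (Finset.mem_filter.2 ⟨h1, h2⟩)
    · rw [if_neg hv, henc]
      simp only [if_neg hv]
      exact Finset.mem_image_of_mem _ (Finset.mem_univ _)
  have hinj : ∀ f₁ ∈ Finset.univ.filter (fun f : Fin n → Fin d => T ⊆ reps S f),
      ∀ f₂ ∈ Finset.univ.filter (fun f : Fin n → Fin d => T ⊆ reps S f),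
      enc f₁ = enc f₂ → f₁ = f₂ := by
    intro f₁ hf₁ f₂ hf₂ he
    have h₁ := (Finset.mem_filter.1 hf₁).2
    have h₂ := (Finset.mem_filter.1 hf₂).2
    have key : ∀ N : ℕ, ∀ v : Fin n, (v : ℕ) < N → f₁ v = f₂ v := by
      intro N
      induction N with
      | zero => intro v hv; omega
      | succ N ih =>
        intro v hv
        by_cases hvT : v ∈ T
        · have e1 := congrFun he v
          rw [henc] at e1
          simp only [if_pos hvT, Sum.inl.injEq] at e1
          obtain ⟨hu1S, hu1v, hu1f⟩ := wit_spec (h₁ hvT)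
          obtain ⟨hu2S, hu2v, hu2f⟩ := wit_spec (h₂ hvT)
          rw [e1] at hu1f hu1v
          have : f₁ (wit S f₂ v) = f₂ (wit S f₂ v) := by
            apply ih
            have : (wit S f₂ v : ℕ) < (v : ℕ) := hu2v
            omega
          rw [← hu1f, ← hu2f, this]
        · have e1 := congrFun he v
          rw [henc] at e1
          simp only [if_neg hvT, Sum.inr.injEq] at e1
          exact e1
    funext v
    exact key n v v.isLt
  have hle := Finset.card_le_card_of_injOn enc (fun f hf => hmem f hf) (fun f₁ hf₁ f₂ hf₂ => hinj f₁ hf₁ f₂ hf₂)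
  calc (Finset.univ.filter (fun f : Fin n → Fin d => T ⊆ reps S f)).card * d ^ T.card
      ≤ tgt.card * d ^ T.card := Nat.mul_le_mul_right _ hle
    _ = (∏ v ∈ T, (S.filter (· < v)).card) * (∏ v ∈ Finset.univ \ T, d) * d ^ T.card := by
        rw [hcard]
    _ = (∏ v ∈ T, (S.filter (· < v)).card) * d ^ n := by
        rw [Finset.prod_const, Nat.mul_assoc, ← pow_add]
        congr 2
        rw [Finset.card_sdiff_of_subset (Finset.subset_univ T), Finset.card_univ, Fintype.card_fin]
        have := (Finset.card_le_card (Finset.subset_univ T)).trans_eq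
          (by rw [Finset.card_univ, Fintype.card_fin] : (Finset.univ : Finset (Fin n)).card = n)
        omega

lemma count_many_reps (S : Finset (Fin n)) (t s : ℕ) :
    t.descFactorial s *
      (Finset.univ.filter (fun f : Fin n → Fin d => t ≤ (reps S f).card)).card * d ^ s ≤
    (S.card.choose 2) ^ s * d ^ n := by
  classical
  set Bad := Finset.univ.filter (fun f : Fin n → Fin d => t ≤ (reps S f).card) with hBad
  have step1 : t.choose s * Bad.card ≤
      ∑ T ∈ S.powersetCard s, (Finset.univ.filter (fun f : Fin n → Fin d => T ⊆ reps S f)).card := by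
    have hf : ∀ f ∈ Bad, t.choose s ≤
        ∑ T ∈ S.powersetCard s, (if T ⊆ reps S f then 1 else 0) := by
      intro f hf
      have h1 : t ≤ (reps S f).card := (Finset.mem_filter.1 hf).2
      have h2 : (reps S f).powersetCard s ⊆
          (S.powersetCard s).filter (fun T => T ⊆ reps S f) := by
        intro T hT
        obtain ⟨hsub, hc⟩ := Finset.mem_powersetCard.1 hT
        exact Finset.mem_filter.2 ⟨Finset.mem_powersetCard.2
          ⟨hsub.trans (Finset.filter_subset _ _), hc⟩, hsub⟩
      calc t.choose s ≤ ((reps S f).card).choose s := Nat.choose_le_choose s h1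
        _ = ((reps S f).powersetCard s).card := (Finset.card_powersetCard s _).symm
        _ ≤ ((S.powersetCard s).filter (fun T => T ⊆ reps S f)).card := Finset.card_le_card h2
        _ = ∑ T ∈ S.powersetCard s, (if T ⊆ reps S f then 1 else 0) :=
          Finset.card_filter _ _
    calc t.choose s * Bad.card = ∑ _f ∈ Bad, t.choose s := by
          rw [Finset.sum_const, smul_eq_mul, Nat.mul_comm]
      _ ≤ ∑ f ∈ Bad, ∑ T ∈ S.powersetCard s, (if T ⊆ reps S f then 1 else 0) :=
          Finset.sum_le_sum hf
      _ = ∑ T ∈ S.powersetCard s, ∑ f ∈ Bad, (if T ⊆ reps S f then 1 else 0) :=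
          Finset.sum_comm
      _ ≤ ∑ T ∈ S.powersetCard s,
            (Finset.univ.filter (fun f : Fin n → Fin d => T ⊆ reps S f)).card := by
          refine Finset.sum_le_sum fun T _ => ?_
          rw [← Finset.card_filter]
          exact Finset.card_le_card (by
            intro f hf
            exact Finset.mem_filter.2 ⟨Finset.mem_univ _, (Finset.mem_filter.1 hf).2⟩)
  calc t.descFactorial s * Bad.card * d ^ s
      = s.factorial * (t.choose s * Bad.card) * d ^ s := by
        rw [Nat.descFactorial_eq_factorial_mul_choose]; ring
    _ ≤ s.factorial * (∑ T ∈ S.powersetCard s,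
          (Finset.univ.filter (fun f : Fin n → Fin d => T ⊆ reps S f)).card) * d ^ s := by
        exact Nat.mul_le_mul_right _ (Nat.mul_le_mul_left _ step1)
    _ = s.factorial * (∑ T ∈ S.powersetCard s,
          (Finset.univ.filter (fun f : Fin n → Fin d => T ⊆ reps S f)).card * d ^ s) := by
        rw [Nat.mul_assoc, Finset.sum_mul]
    _ ≤ s.factorial * (∑ T ∈ S.powersetCard s,
          (∏ v ∈ T, (S.filter (· < v)).card) * d ^ n) := by
        refine Nat.mul_le_mul_left _ (Finset.sum_le_sum fun T hT => ?_)
        have hc := (Finset.mem_powersetCard.1 hT).2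
        have := count_forced (d := d) S T
        rwa [hc] at this
    _ = (s.factorial * ∑ T ∈ S.powersetCard s, ∏ v ∈ T, (S.filter (· < v)).card) * d ^ n := by
        rw [← Finset.sum_mul]; ring
    _ ≤ (∑ v ∈ S, (S.filter (· < v)).card) ^ s * d ^ n :=
        Nat.mul_le_mul_right _ (esymm_le_pow S _ s)
    _ ≤ (S.card.choose 2) ^ s * d ^ n :=
        Nat.mul_le_mul_right _ (Nat.pow_le_pow_left (sum_rank_le S) s)


open Finset

variable {n k d : ℕ}

def msupp (M : Finset (Sym2 (Fin n))) : Finset (Fin n) :=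
  M.biUnion (fun e => Finset.univ.filter (· ∈ e))

lemma mem_msupp {M : Finset (Sym2 (Fin n))} {v : Fin n} :
    v ∈ msupp M ↔ ∃ e ∈ M, v ∈ e := by
  simp [msupp]

lemma msupp_card {M : Finset (Sym2 (Fin n))} (hM : IsMatching M) :
    (msupp M).card = 2 * M.card := by
  rw [msupp, Finset.card_biUnion]
  · rw [Finset.sum_congr rfl (fun e he => ?_), Finset.sum_const, smul_eq_mul, Nat.mul_comm]
    obtain ⟨⟨a, b⟩, rfl⟩ := e.exists_rep
    have hab : a ≠ b := by
      intro h
      exact hM.1 _ he (Sym2.mk_isDiag_iff.2 h)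
    have : (Finset.univ.filter (· ∈ s(a, b))) = {a, b} := by
      ext v
      simp [Sym2.mem_iff]
    rw [this, Finset.card_pair hab]
  · intro e he f hf hef
    rw [Function.onFun, Finset.disjoint_left]
    intro v hv hv'
    exact hM.2 e he f hf hef v ⟨(Finset.mem_filter.1 hv).2, (Finset.mem_filter.1 hv').2⟩

lemma vbad_bound (S : Finset (Fin n)) (g : Fin n → Fin d) :
    (S.filter (fun v => ∃ u ∈ S, u ≠ v ∧ g u = g v)).card + 2 * (S.image g).card
      ≤ 2 * S.card := by
  classical
  set Vbad := S.filter (fun v => ∃ u ∈ S, u ≠ v ∧ g u = g v) with hVbad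
  have hS : S.card = ∑ c ∈ S.image g, (S.filter (fun v => g v = c)).card :=
    Finset.card_eq_sum_card_fiberwise (fun v hv => Finset.mem_image_of_mem g hv)
  have hV : Vbad.card = ∑ c ∈ S.image g, (Vbad.filter (fun v => g v = c)).card :=
    Finset.card_eq_sum_card_fiberwise
      (fun v hv => Finset.mem_image_of_mem g (Finset.mem_filter.1 hv).1)
  have hper : ∀ c ∈ S.image g,
      (Vbad.filter (fun v => g v = c)).card + 2 ≤ 2 * (S.filter (fun v => g v = c)).card := by
    intro c hc
    obtain ⟨w, hw, hwc⟩ := Finset.mem_image.1 hc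
    have hpos : 1 ≤ (S.filter (fun v => g v = c)).card :=
      Finset.card_pos.2 ⟨w, Finset.mem_filter.2 ⟨hw, hwc⟩⟩
    rcases Nat.lt_or_ge (S.filter (fun v => g v = c)).card 2 with h2 | h2
    · have h1 : (S.filter (fun v => g v = c)).card = 1 := by omega
      obtain ⟨x, hx⟩ := Finset.card_eq_one.1 h1
      have hempty : Vbad.filter (fun v => g v = c) = ∅ := by
        rw [Finset.eq_empty_iff_forall_notMem]
        intro v hv
        obtain ⟨hvV, hvc⟩ := Finset.mem_filter.1 hv
        obtain ⟨hvS, u, huS, huv, hguv⟩ := Finset.mem_filter.1 hvV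
        have hvx : v = x := by
          have : v ∈ S.filter (fun v => g v = c) := Finset.mem_filter.2 ⟨hvS, hvc⟩
          rw [hx] at this; exact Finset.mem_singleton.1 this
        have hux : u = x := by
          have : u ∈ S.filter (fun v => g v = c) :=
            Finset.mem_filter.2 ⟨huS, by rw [hguv, hvc]⟩
          rw [hx] at this; exact Finset.mem_singleton.1 this
        exact huv (hux.trans hvx.symm)
      rw [hempty, Finset.card_empty]; omega
    · have : (Vbad.filter (fun v => g v = c)).card ≤ (S.filter (fun v => g v = c)).card :=
        Finset.card_le_card (Finset.filter_subset_filter _ (Finset.filter_subset _ _))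
      omega
  calc Vbad.card + 2 * (S.image g).card
      = ∑ c ∈ S.image g, ((Vbad.filter (fun v => g v = c)).card + 2) := by
        rw [Finset.sum_add_distrib, Finset.sum_const, smul_eq_mul, ← hV, Nat.mul_comm]
    _ ≤ ∑ c ∈ S.image g, 2 * (S.filter (fun v => g v = c)).card :=
        Finset.sum_le_sum hper
    _ = 2 * S.card := by rw [← Finset.mul_sum, ← hS]

lemma matching_preserved {ε : ℝ} (hε : 0 < ε) (hn : 0 < n)
    (g : Fin n → Fin d) (E M : Finset (Sym2 (Fin n))) (hME : M ⊆ E)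
    (hM : IsMatching M) (hMk : M.card = k)
    (himg : (((msupp M).image g).card : ℝ) ≥ (1 - ε / 4) * (2 * k)) :
    ((matchNum (E.image (Sym2.map g)) : ℝ)) ≥ (1 - ε) * k := by
  classical
  set S := msupp M with hSdef
  have hScard : S.card = 2 * k := by rw [hSdef, msupp_card hM, hMk]
  set Vbad := S.filter (fun v => ∃ u ∈ S, u ≠ v ∧ g u = g v) with hVbad
  have hVb : (Vbad.card : ℝ) ≤ ε * k := by
    have h1 := vbad_bound S g
    rw [hScard] at h1
    have h2 : (Vbad.card : ℝ) + 2 * (((S.image g)).card : ℝ) ≤ 2 * (2 * k) := by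
      exact_mod_cast h1
    nlinarith [himg]
  set Mg := M.filter (fun e => ∀ v, v ∈ e → v ∉ Vbad) with hMg
  -- removed edges inject into bad vertices
  have hrem : (M \ Mg).card ≤ Vbad.card := by
    set pick : Sym2 (Fin n) → Fin n := fun e =>
      if h : (Finset.univ.filter (fun v => v ∈ e ∧ v ∈ Vbad)).Nonempty then
        (Finset.univ.filter (fun v => v ∈ e ∧ v ∈ Vbad)).min' h else ⟨0, hn⟩ with hpick
    have hpick_spec : ∀ e ∈ M \ Mg, pick e ∈ e ∧ pick e ∈ Vbad := by
      intro e he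
      obtain ⟨heM, heg⟩ := Finset.mem_sdiff.1 he
      have : ¬ (∀ v, v ∈ e → v ∉ Vbad) := by
        intro hcon
        exact heg (Finset.mem_filter.2 ⟨heM, hcon⟩)
      push_neg at this
      obtain ⟨v, hv1, hv2⟩ := this
      have hne : (Finset.univ.filter (fun v => v ∈ e ∧ v ∈ Vbad)).Nonempty :=
        ⟨v, Finset.mem_filter.2 ⟨Finset.mem_univ _, hv1, hv2⟩⟩
      rw [hpick]
      simp only [dif_pos hne]
      have := Finset.min'_mem _ hne
      exact (Finset.mem_filter.1 this).2
    apply Finset.card_le_card_of_injOn pick (fun e he => (hpick_spec e he).2)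
    intro e₁ he₁ e₂ he₂ hpe
    simp only [Finset.mem_coe] at he₁ he₂
    by_contra hne
    exact hM.2 e₁ (Finset.mem_sdiff.1 he₁).1 e₂ (Finset.mem_sdiff.1 he₂).1 hne (pick e₁)
      ⟨(hpick_spec e₁ he₁).1, hpe ▸ (hpick_spec e₂ he₂).1⟩
  have hMgcard : (Mg.card : ℝ) ≥ (1 - ε) * k := by
    have h1 : M.card ≤ Mg.card + (M \ Mg).card := by
      have hsub : Mg ⊆ M := by rw [hMg]; exact Finset.filter_subset _ M
      have := Finset.card_sdiff_add_card_eq_card hsub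
      omega
    have h2 : (M.card : ℝ) ≤ (Mg.card : ℝ) + (Vbad.card : ℝ) := by
      have : M.card ≤ Mg.card + Vbad.card := le_trans h1 (by omega)
      exact_mod_cast this
    rw [hMk] at h2
    nlinarith
  -- vertices of good edges are in S and not bad
  have hgood : ∀ e ∈ Mg, ∀ v, v ∈ e → v ∈ S ∧ v ∉ Vbad := by
    intro e he v hv
    obtain ⟨heM, hev⟩ := Finset.mem_filter.1 he
    exact ⟨mem_msupp.2 ⟨e, heM, hv⟩, hev v hv⟩
  -- key: shared color implies same edge
  have hkey : ∀ e₁ ∈ Mg, ∀ e₂ ∈ Mg, ∀ c : Fin d,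
      c ∈ Sym2.map g e₁ → c ∈ Sym2.map g e₂ → e₁ = e₂ := by
    intro e₁ he₁ e₂ he₂ c hc₁ hc₂
    obtain ⟨u, hu, huc⟩ := Sym2.mem_map.1 hc₁
    obtain ⟨x, hx, hxc⟩ := Sym2.mem_map.1 hc₂
    have hux : u = x := by
      by_contra hne
      obtain ⟨huS, huB⟩ := hgood e₁ he₁ u hu
      obtain ⟨hxS, -⟩ := hgood e₂ he₂ x hx
      exact huB (Finset.mem_filter.2 ⟨huS, x, hxS, Ne.symm hne, by rw [hxc, huc]⟩)
    by_contra hne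
    exact hM.2 e₁ (Finset.mem_filter.1 he₁).1 e₂ (Finset.mem_filter.1 he₂).1 hne u
      ⟨hu, hux ▸ hx⟩
  set M' := Mg.image (Sym2.map g) with hM'
  have hM'card : M'.card = Mg.card := by
    apply Finset.card_image_of_injOn
    intro e₁ he₁ e₂ he₂ hmap
    simp only [Finset.mem_coe] at he₁ he₂
    obtain ⟨⟨a, b⟩, rfl⟩ := e₁.exists_rep
    have : g a ∈ Sym2.map g s(a, b) := by
      rw [Sym2.map_pair_eq]; exact Sym2.mem_mk_left _ _
    exact hkey _ he₁ _ he₂ (g a) this (hmap ▸ this)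
  have hM'match : IsMatching M' := by
    constructor
    · intro e' he'
      obtain ⟨e, he, rfl⟩ := Finset.mem_image.1 he'
      obtain ⟨⟨a, b⟩, rfl⟩ := e.exists_rep
      rw [Sym2.map_pair_eq, Sym2.mk_isDiag_iff]
      intro hgab
      have hab : a ≠ b := by
        intro h
        exact hM.1 _ (Finset.mem_filter.1 he).1 (Sym2.mk_isDiag_iff.2 h)
      obtain ⟨haS, haB⟩ := hgood _ he a (Sym2.mem_mk_left _ _)
      obtain ⟨hbS, -⟩ := hgood _ he b (Sym2.mem_mk_right _ _)
      exact haB (Finset.mem_filter.2 ⟨haS, b, hbS, Ne.symm hab, hgab.symm⟩)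
    · intro e' he' f' hf' hne c ⟨hce, hcf⟩
      obtain ⟨e, he, rfl⟩ := Finset.mem_image.1 he'
      obtain ⟨f, hf, rfl⟩ := Finset.mem_image.1 hf'
      exact hne (by rw [hkey e he f hf c hce hcf])
  have hsup : (matchNum (E.image (Sym2.map g)) : ℝ) ≥ (M'.card : ℝ) := by
    have : M'.card ≤ matchNum (E.image (Sym2.map g)) := by
      apply Finset.le_sup (f := Finset.card)
      refine Finset.mem_filter.2 ⟨Finset.mem_powerset.2 ?_, hM'match⟩
      rw [hM']
      exact Finset.image_subset_image ((Finset.filter_subset _ _).trans hME)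
    exact_mod_cast this
  rw [hM'card] at hsup
  linarith


/-- `L = ⌈512·log n/ε²⌉` independent uniformly random partitionings of an
`n`-vertex set into `d = ⌈8k/ε⌉` parts are, with probability at least `1 - 1/n`,
such that every `2k`-set of vertices is shattered into `(1-ε/4)·2k` distinct parts by some
partitioning; consequently they are `(k,ε)` matching preserving for every graph on these
vertices. -/
theorem stmt6 (n k d L : ℕ) (ε : ℝ) (hk : 1 ≤ k) (hkn : k ≤ n)
    (hε : 0 < ε) (hε1 : ε < 1)
    (hd : d = ⌈(8 * k : ℝ) / ε⌉₊)
    (hL : L = ⌈512 * Real.log n / ε ^ 2⌉₊) :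
    (1 - 1 / (n : ℝ)) * Fintype.card (Fin L → Fin n → Fin d) ≤
      Nat.card {ω : Fin L → Fin n → Fin d //
        (∀ S : Finset (Fin n), S.card = 2 * k →
          ∃ j : Fin L, ((S.image (ω j)).card : ℝ) ≥ (1 - ε / 4) * (2 * k)) ∧
        ∀ E M : Finset (Sym2 (Fin n)), M ⊆ E → IsMatching M → M.card = k →
          ∃ j : Fin L, ((matchNum (E.image (Sym2.map (ω j))) : ℝ)) ≥ (1 - ε) * k} := by
  classical
  have hn1 : 1 ≤ n := le_trans hk hkn
  have hn0 : 0 < n := hn1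
  have hk0 : (0:ℝ) < k := by exact_mod_cast hk
  have hdpos : 0 < d := by
    rw [hd]; exact Nat.ceil_pos.2 (by positivity)
  have hdR : (8*(k:ℝ))/ε ≤ (d:ℝ) := by rw [hd]; exact Nat.le_ceil _
  set t : ℕ := ⌊ε * k / 2⌋₊ + 1 with htdef
  set s : ℕ := ⌈ε * k / 8⌉₊ with hsdef
  have htR : ε * k / 2 < (t:ℝ) := by
    rw [htdef]; push_cast; exact Nat.lt_floor_add_one _
  have hsR1 : ε * k / 8 ≤ (s:ℝ) := Nat.le_ceil _
  have hsR2 : (s:ℝ) < ε * k / 8 + 1 := by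
    rw [hsdef]; exact Nat.ceil_lt_add_one (by positivity)
  have hst : s ≤ t := by
    have h1 : (s:ℝ) < (t:ℝ) + 1 := by nlinarith
    have h2 : s < t + 1 := by exact_mod_cast h1
    omega
  have htsR : ((t + 1 - s : ℕ) : ℝ) = (t:ℝ) + 1 - s := by
    rw [Nat.cast_sub (by omega)]; push_cast; ring
  have hA : (3:ℝ) * k^2 ≤ ((t+1-s : ℕ):ℝ) * d := by
    have h1 : 3*ε*(k:ℝ)/8 ≤ ((t+1-s:ℕ):ℝ) := by rw [htsR]; linarith
    have h2 : (0:ℝ) ≤ 3*ε*k/8 := by positivity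
    calc (3:ℝ)*k^2 = (3*ε*k/8) * (8*k/ε) := by field_simp
      _ ≤ ((t+1-s:ℕ):ℝ) * d := mul_le_mul h1 hdR (by positivity) (le_trans h2 h1)
  have hApos : (0:ℝ) < ((t+1-s:ℕ):ℝ) * d := by
    have : (0:ℝ) < 3*k^2 := by positivity
    linarith
  -- per-partitioning failure count
  have hfail : ∀ S : Finset (Fin n), S.card = 2*k →
      ((Finset.univ.filter (fun f : Fin n → Fin d =>
        ¬ (((S.image f).card : ℝ) ≥ (1 - ε/4)*(2*k)))).card : ℝ)
        ≤ (2/3)^s * (d:ℝ)^n := by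
    intro S hS
    have hsub : Finset.univ.filter (fun f : Fin n → Fin d =>
        ¬ (((S.image f).card : ℝ) ≥ (1 - ε/4)*(2*k))) ⊆
        Finset.univ.filter (fun f : Fin n → Fin d => t ≤ (reps S f).card) := by
      intro f hf
      have himg : ((S.image f).card : ℝ) < (1 - ε/4)*(2*k) :=
        lt_of_not_ge (Finset.mem_filter.1 hf).2
      have hcr : S.card ≤ (S.image f).card + (reps S f).card := card_le_image_add_reps S f
      rw [hS] at hcr
      have hcrR : (2*(k:ℝ)) ≤ ((S.image f).card : ℝ) + ((reps S f).card : ℝ) := by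
        exact_mod_cast hcr
      have hgt : ε * k / 2 < ((reps S f).card : ℝ) := by nlinarith
      have hfl : (⌊ε * k / 2⌋₊ : ℝ) < ((reps S f).card : ℝ) :=
        lt_of_le_of_lt (Nat.floor_le (by positivity)) hgt
      have : ⌊ε * k / 2⌋₊ < (reps S f).card := by exact_mod_cast hfl
      exact Finset.mem_filter.2 ⟨Finset.mem_univ _, by omega⟩
    have hcount := count_many_reps (d := d) S t s
    rw [hS] at hcount
    have hch : (2*k).choose 2 ≤ 2*k^2 := by
      rw [Nat.choose_two_right]
      apply Nat.div_le_of_le_mul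
      calc 2*k*(2*k-1) ≤ 2*k*(2*k) := Nat.mul_le_mul_left _ (Nat.sub_le _ _)
        _ ≤ 2*(2*k^2) := by nlinarith []
    have hcount2 : (t+1-s)^s *
        (Finset.univ.filter (fun f : Fin n → Fin d => t ≤ (reps S f).card)).card * d^s ≤
        (2*k^2)^s * d^n := by
      calc (t+1-s)^s * (Finset.univ.filter (fun f : Fin n → Fin d => t ≤ (reps S f).card)).card * d^s
          ≤ t.descFactorial s *
            (Finset.univ.filter (fun f : Fin n → Fin d => t ≤ (reps S f).card)).card * d^s := by
            exact Nat.mul_le_mul_right _ (Nat.mul_le_mul_right _ (Nat.pow_sub_le_descFactorial t s))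
        _ ≤ ((2*k).choose 2)^s * d^n := hcount
        _ ≤ (2*k^2)^s * d^n := Nat.mul_le_mul_right _ (Nat.pow_le_pow_left hch s)
    -- cast to ℝ
    set B2 := (Finset.univ.filter (fun f : Fin n → Fin d => t ≤ (reps S f).card)).card with hB2
    have hcountR : (B2:ℝ) * (((t+1-s:ℕ):ℝ) * d)^s ≤ (2*(k:ℝ)^2)^s * (d:ℝ)^n := by
      have := hcount2
      have hcast : (((t+1-s:ℕ))^s * B2 * d^s : ℕ) = ((2*k^2)^s * d^n : ℕ) ∨ True := Or.inr trivial
      calc (B2:ℝ) * (((t+1-s:ℕ):ℝ) * d)^s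
          = ((t+1-s:ℕ):ℝ)^s * B2 * (d:ℝ)^s := by rw [mul_pow]; ring
        _ ≤ (2*(k:ℝ)^2)^s * (d:ℝ)^n := by exact_mod_cast hcount2
    have hBle : (B2:ℝ) ≤ (2/3)^s * (d:ℝ)^n := by
      have h23 : (2*(k:ℝ)^2)^s ≤ ((2/3) * (((t+1-s:ℕ):ℝ) * d))^s := by
        apply pow_le_pow_left₀ (by positivity)
        linarith
      have hAs : (0:ℝ) < (((t+1-s:ℕ):ℝ) * d)^s := pow_pos hApos s
      have h3 : (B2:ℝ) * (((t+1-s:ℕ):ℝ) * d)^s ≤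
          (2/3)^s * (((t+1-s:ℕ):ℝ) * d)^s * (d:ℝ)^n := by
        calc (B2:ℝ) * (((t+1-s:ℕ):ℝ) * d)^s ≤ (2*(k:ℝ)^2)^s * (d:ℝ)^n := hcountR
          _ ≤ ((2/3) * (((t+1-s:ℕ):ℝ) * d))^s * (d:ℝ)^n := by
              exact mul_le_mul_of_nonneg_right h23 (by positivity)
          _ = (2/3)^s * (((t+1-s:ℕ):ℝ) * d)^s * (d:ℝ)^n := by rw [mul_pow]
      have := mul_le_mul_of_nonneg_right h3 (le_of_lt (inv_pos.2 hAs))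
      calc (B2:ℝ) = (B2:ℝ) * ((((t+1-s:ℕ):ℝ) * d)^s * ((((t+1-s:ℕ):ℝ) * d)^s)⁻¹) := by
            rw [mul_inv_cancel₀ (ne_of_gt hAs), mul_one]
        _ = (B2:ℝ) * (((t+1-s:ℕ):ℝ) * d)^s * ((((t+1-s:ℕ):ℝ) * d)^s)⁻¹ := by ring
        _ ≤ (2/3)^s * (((t+1-s:ℕ):ℝ) * d)^s * (d:ℝ)^n * ((((t+1-s:ℕ):ℝ) * d)^s)⁻¹ := this
        _ = (2/3)^s * (d:ℝ)^n * ((((t+1-s:ℕ):ℝ) * d)^s * ((((t+1-s:ℕ):ℝ) * d)^s)⁻¹) := by ring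
        _ = (2/3)^s * (d:ℝ)^n := by rw [mul_inv_cancel₀ (ne_of_gt hAs), mul_one]
    exact le_trans (by exact_mod_cast Nat.cast_le.2 (Finset.card_le_card hsub)) hBle
    -- global counting
  set D := Fintype.card (Fin L → Fin n → Fin d) with hDdef
  have hDnat : D = (d^n)^L := by
    rw [hDdef, Fintype.card_fun, Fintype.card_fun]
    simp
  have hDR : (D:ℝ) = ((d:ℝ)^n)^L := by rw [hDnat]; push_cast; ring
  set P1 : (Fin L → Fin n → Fin d) → Prop := fun ω => ∀ S : Finset (Fin n), S.card = 2*k →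
    ∃ j : Fin L, ((S.image (ω j)).card : ℝ) ≥ (1 - ε / 4) * (2 * k) with hP1
  set Good := Finset.univ.filter P1 with hGood
  set Bad := Finset.univ.filter (fun ω => ¬ P1 ω) with hBadd
  have hGB : Good.card + Bad.card = D := by
    rw [hGood, hBadd, Finset.card_filter_add_card_filter_not, Finset.card_univ]
  have hBadsub : Bad ⊆ (Finset.univ.powersetCard (2*k)).biUnion (fun S =>
      Fintype.piFinset (fun _ : Fin L => Finset.univ.filter (fun f : Fin n → Fin d =>
        ¬ (((S.image f).card : ℝ) ≥ (1 - ε/4)*(2*k))))) := by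
    intro ω hω
    have h : ¬ (∀ S : Finset (Fin n), S.card = 2*k →
        ∃ j : Fin L, ((S.image (ω j)).card : ℝ) ≥ (1 - ε / 4) * (2 * k)) :=
      (Finset.mem_filter.1 hω).2
    push_neg at h
    obtain ⟨S, hScard, hall⟩ := h
    refine Finset.mem_biUnion.2 ⟨S, Finset.mem_powersetCard.2 ⟨Finset.subset_univ _, hScard⟩, ?_⟩
    rw [Fintype.mem_piFinset]
    intro j
    exact Finset.mem_filter.2 ⟨Finset.mem_univ _, not_le.2 (hall j)⟩
  have hBadR : (Bad.card : ℝ) ≤ (n.choose (2*k) : ℝ) * ((2/3)^s * (d:ℝ)^n)^L := by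
    have h1 : Bad.card ≤ ∑ S ∈ Finset.univ.powersetCard (2*k),
        (Fintype.piFinset (fun _ : Fin L => Finset.univ.filter (fun f : Fin n → Fin d =>
          ¬ (((S.image f).card : ℝ) ≥ (1 - ε/4)*(2*k))))).card :=
      le_trans (Finset.card_le_card hBadsub) (Finset.card_biUnion_le)
    have h2 : ((Bad.card : ℝ)) ≤ ∑ S ∈ Finset.univ.powersetCard (2*k),
        (((Finset.univ.filter (fun f : Fin n → Fin d =>
          ¬ (((S.image f).card : ℝ) ≥ (1 - ε/4)*(2*k)))).card : ℝ))^L := by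
      have := h1
      calc ((Bad.card : ℝ)) ≤ (( ∑ S ∈ Finset.univ.powersetCard (2*k),
          (Fintype.piFinset (fun _ : Fin L => Finset.univ.filter (fun f : Fin n → Fin d =>
            ¬ (((S.image f).card : ℝ) ≥ (1 - ε/4)*(2*k))))).card : ℕ) : ℝ) := by
            exact_mod_cast h1
        _ = _ := by
            push_cast
            refine Finset.sum_congr rfl fun S _ => ?_
            rw [Fintype.card_piFinset_const]
            push_cast
            ring
    calc ((Bad.card : ℝ)) ≤ ∑ S ∈ Finset.univ.powersetCard (2*k),
        (((Finset.univ.filter (fun f : Fin n → Fin d =>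
          ¬ (((S.image f).card : ℝ) ≥ (1 - ε/4)*(2*k)))).card : ℝ))^L := h2
      _ ≤ ∑ _S ∈ Finset.univ.powersetCard (2*k), ((2/3)^s * (d:ℝ)^n)^L := by
          refine Finset.sum_le_sum fun S hS => ?_
          have hScard : S.card = 2*k := (Finset.mem_powersetCard.1 hS).2
          exact pow_le_pow_left₀ (by positivity) (hfail S hScard) L
      _ = (((Finset.univ : Finset (Fin n)).powersetCard (2*k)).card : ℝ) *
            ((2/3)^s * (d:ℝ)^n)^L := by
          rw [Finset.sum_const, nsmul_eq_mul]
      _ = (n.choose (2*k) : ℝ) * ((2/3)^s * (d:ℝ)^n)^L := by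
          rw [Finset.card_powersetCard, Finset.card_univ, Fintype.card_fin]
  -- numeric bound
  have hnR1 : (1:ℝ) ≤ n := by exact_mod_cast hn1
  have hlogn : 0 ≤ Real.log n := Real.log_nonneg hnR1
  have hlog32 : (1:ℝ)/3 ≤ Real.log (3/2) := by
    rw [Real.le_log_iff_exp_le (by norm_num)]
    have h := Real.add_one_lt_exp (x := -(1/3)) (by norm_num)
    have h2 : Real.exp (-(1/3)) * Real.exp (1/3) = 1 := by
      rw [← Real.exp_add]; norm_num
    nlinarith [Real.exp_pos (1/3:ℝ), Real.exp_pos (-(1/3):ℝ)]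
  have hpow : (n:ℝ)^(2*k+1) ≤ (3/2:ℝ)^(s*L) := by
    have hnpos : (0:ℝ) < (n:ℝ)^(2*k+1) := by positivity
    rw [← Real.log_le_log_iff hnpos (by positivity), Real.log_pow, Real.log_pow]
    have hLR : 512 * Real.log n / ε^2 ≤ (L:ℝ) := by rw [hL]; exact Nat.le_ceil _
    have hsL : (64:ℝ)*k*Real.log n ≤ (s:ℝ)*(L:ℝ) := by
      have e2 : (ε*(k:ℝ)/8) * (512*Real.log n/ε^2) ≤ (s:ℝ)*(L:ℝ) :=
        mul_le_mul hsR1 hLR (by positivity) (by positivity)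
      have e1 : (ε*(k:ℝ)/8) * (512*Real.log n/ε^2) = 64*k*Real.log n/ε := by
        field_simp; ring
      have e3 : (64:ℝ)*k*Real.log n ≤ 64*k*Real.log n/ε := by
        rw [le_div_iff₀ hε]
        have h0 : (0:ℝ) ≤ 64*k*Real.log n := by positivity
        nlinarith [h0, hε1]
      rw [e1] at e2
      linarith
    have hkR1 : (1:ℝ) ≤ k := by exact_mod_cast hk
    push_cast
    calc ((2:ℝ)*k+1) * Real.log n ≤ (64*k/3) * Real.log n := by
          apply mul_le_mul_of_nonneg_right _ hlogn
          nlinarith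
      _ = (64*k*Real.log n)/3 := by ring
      _ ≤ ((s:ℝ)*(L:ℝ))/3 := by linarith
      _ = ((s:ℝ)*(L:ℝ)) * (1/3) := by ring
      _ ≤ ((s:ℝ)*(L:ℝ)) * Real.log (3/2) := by
          apply mul_le_mul_of_nonneg_left hlog32 (by positivity)
      _ = (s:ℝ)*(L:ℝ) * Real.log (3/2) := rfl
  have hnum : (n:ℝ) * (n.choose (2*k):ℝ) * ((2/3:ℝ)^s)^L ≤ 1 := by
    have hnc : (n:ℝ) * (n.choose (2*k):ℝ) ≤ (n:ℝ)^(2*k+1) := by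
      have h1 : ((n.choose (2*k)):ℝ) ≤ (n:ℝ)^(2*k) := by
        exact_mod_cast Nat.choose_le_pow n (2*k)
      calc (n:ℝ) * (n.choose (2*k):ℝ) ≤ (n:ℝ) * (n:ℝ)^(2*k) := by
            apply mul_le_mul_of_nonneg_left h1 (by positivity)
        _ = (n:ℝ)^(2*k+1) := by rw [pow_succ]; ring
    have h32pos : (0:ℝ) < (3/2:ℝ)^(s*L) := by positivity
    have h23 : ((2/3:ℝ)^s)^L = ((3/2:ℝ)^(s*L))⁻¹ := by
      rw [← pow_mul, ← inv_pow]
      norm_num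
    rw [h23]
    calc (n:ℝ) * (n.choose (2*k):ℝ) * ((3/2:ℝ)^(s*L))⁻¹
        ≤ (3/2:ℝ)^(s*L) * ((3/2:ℝ)^(s*L))⁻¹ := by
          apply mul_le_mul_of_nonneg_right (le_trans hnc hpow) (by positivity)
      _ = 1 := mul_inv_cancel₀ (ne_of_gt h32pos)
  have hBadD : (Bad.card:ℝ) * n ≤ (D:ℝ) := by
    calc (Bad.card:ℝ) * n
        ≤ ((n.choose (2*k) : ℝ) * ((2/3)^s * (d:ℝ)^n)^L) * n := by
          apply mul_le_mul_of_nonneg_right hBadR (by positivity)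
      _ = ((n:ℝ) * (n.choose (2*k):ℝ) * ((2/3:ℝ)^s)^L) * ((d:ℝ)^n)^L := by
          rw [mul_pow]; ring
      _ ≤ 1 * ((d:ℝ)^n)^L := by
          apply mul_le_mul_of_nonneg_right hnum (by positivity)
      _ = (D:ℝ) := by rw [one_mul, hDR]
  -- identify the subtype count with Good
  have himp : ∀ ω : Fin L → Fin n → Fin d, P1 ω →
      (∀ E M : Finset (Sym2 (Fin n)), M ⊆ E → IsMatching M → M.card = k →
        ∃ j : Fin L, ((matchNum (E.image (Sym2.map (ω j))) : ℝ)) ≥ (1 - ε) * k) := by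
    intro ω h E M hME hM hMk
    have hScard : (msupp M).card = 2*k := by rw [msupp_card hM, hMk]
    obtain ⟨j, hj⟩ := h (msupp M) hScard
    exact ⟨j, matching_preserved hε hn0 (ω j) E M hME hM hMk hj⟩
  have hNat : Nat.card {ω : Fin L → Fin n → Fin d // P1 ω ∧
      (∀ E M : Finset (Sym2 (Fin n)), M ⊆ E → IsMatching M → M.card = k →
        ∃ j : Fin L, ((matchNum (E.image (Sym2.map (ω j))) : ℝ)) ≥ (1 - ε) * k)}
      = Good.card := by
    rw [Nat.card_eq_fintype_card, Fintype.card_subtype, hGood]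
    apply congrArg Finset.card
    apply Finset.filter_congr
    intro ω _
    exact ⟨And.left, fun h => ⟨h, himp ω h⟩⟩
  rw [hNat]
  have hBadle : (Bad.card : ℝ) ≤ (D:ℝ) / n := by
    rw [le_div_iff₀ (show (0:ℝ) < n by exact_mod_cast hn0)]
    exact hBadD
  have hGoodR : (Good.card : ℝ) = (D:ℝ) - Bad.card := by
    have : (Good.card:ℝ) + Bad.card = D := by exact_mod_cast hGB
    linarith
  have hident : (1 - 1/(n:ℝ)) * (D:ℝ) = (D:ℝ) - (D:ℝ)/n := by ring
  rw [hident, hGoodR]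
  linarith
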